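/- Let M be a metrizable topological space, I a nonempty subset of ℝ, and K a compact subset of the space C(I, M) of continuous maps from I to M endowed with the compact-open topology. Then the set of real-valued functions on K of the form Φ(u) = φ(u(t₁), …, u(t_n)), where n ∈ ℕ, t₁, …, t_n ∈ I, and φ : Mⁿ → ℝ is continuous and bounded, is dense in the Banach space C(K; ℝ) of continuous real-valued functions on K with the supremum norm. -/

import Mathlib

open Filter Topology

set_option maxHeartbeats 1000000
/-- Stone–Weierstrass density of cylindrical functions: for a metrizable space
`M`, a nonempty set `I ⊆ ℝ`, and a compact set `K` of continuous paths
`C(I, M)` (compact-open topology), the functions of the form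
`Φ(u) = φ(u(t₁), …, u(t_n))` with `t₁, …, t_n ∈ I` and `φ : Mⁿ → ℝ` continuous
and bounded are dense in `C(K, ℝ)` (whose topology, `K` being compact, is that
of the supremum norm). -/
theorem cylindrical_functions_dense
    {M : Type*} [TopologicalSpace M] [TopologicalSpace.MetrizableSpace M]
    (I : Set ℝ) (hI : I.Nonempty)
    (K : Set C(I, M)) (hK : IsCompact K) :
    Dense {Φ : C(K, ℝ) |
      ∃ (n : ℕ) (t : Fin n → ℝ) (ht : ∀ i, t i ∈ I) (φ : (Fin n → M) → ℝ),
        Continuous φ ∧ (∃ C : ℝ, ∀ v, |φ v| ≤ C) ∧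
        ∀ u : K, Φ u = φ fun i => (u : C(I, M)) ⟨t i, ht i⟩} := by
  haveI : CompactSpace K := isCompact_iff_compactSpace.mp hK
  haveI : NormalSpace M := by
    letI := TopologicalSpace.metrizableSpaceMetric M; infer_instance
  set S : Set C(K, ℝ) := {Φ : C(K, ℝ) |
      ∃ (n : ℕ) (t : Fin n → ℝ) (ht : ∀ i, t i ∈ I) (φ : (Fin n → M) → ℝ),
        Continuous φ ∧ (∃ C : ℝ, ∀ v, |φ v| ≤ C) ∧
        ∀ u : K, Φ u = φ fun i => (u : C(I, M)) ⟨t i, ht i⟩} with hS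
  -- constants belong to S
  have hconst : ∀ c : ℝ, (algebraMap ℝ C(K, ℝ)) c ∈ S := by
    intro c
    exact ⟨0, Fin.elim0, fun i => i.elim0, fun _ => c, continuous_const,
      ⟨|c|, fun _ => le_rfl⟩, fun u => rfl⟩
  -- closure under addition
  have hadd : ∀ Φ₁ Φ₂ : C(K, ℝ), Φ₁ ∈ S → Φ₂ ∈ S → Φ₁ + Φ₂ ∈ S := by
    rintro Φ₁ Φ₂ ⟨n₁, t₁, ht₁, φ₁, hφ₁c, ⟨C₁, hC₁⟩, hφ₁⟩
      ⟨n₂, t₂, ht₂, φ₂, hφ₂c, ⟨C₂, hC₂⟩, hφ₂⟩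
    have htapp : ∀ i, Fin.append t₁ t₂ i ∈ I := by
      intro i
      refine Fin.addCases (fun j => ?_) (fun j => ?_) i
      · rw [Fin.append_left]; exact ht₁ j
      · rw [Fin.append_right]; exact ht₂ j
    refine ⟨n₁ + n₂, Fin.append t₁ t₂, htapp,
      fun v => φ₁ (fun i => v (Fin.castAdd n₂ i)) + φ₂ (fun i => v (Fin.natAdd n₁ i)),
      ?_, ⟨C₁ + C₂, ?_⟩, ?_⟩
    · exact (hφ₁c.comp (continuous_pi fun i => continuous_apply _)).add
        (hφ₂c.comp (continuous_pi fun i => continuous_apply _))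
    · intro v
      exact (abs_add_le _ _).trans (add_le_add (hC₁ _) (hC₂ _))
    · intro u
      have e₁ : (fun i => (u : C(I, M)) ⟨Fin.append t₁ t₂ (Fin.castAdd n₂ i), htapp (Fin.castAdd n₂ i)⟩)
          = fun i => (u : C(I, M)) ⟨t₁ i, ht₁ i⟩ := by
        funext i; exact congrArg _ (Subtype.ext (Fin.append_left t₁ t₂ i))
      have e₂ : (fun i => (u : C(I, M)) ⟨Fin.append t₁ t₂ (Fin.natAdd n₁ i), htapp (Fin.natAdd n₁ i)⟩)
          = fun i => (u : C(I, M)) ⟨t₂ i, ht₂ i⟩ := by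
        funext i; exact congrArg _ (Subtype.ext (Fin.append_right t₁ t₂ i))
      simp only [ContinuousMap.add_apply, hφ₁ u, hφ₂ u, e₁, e₂]
  -- closure under multiplication
  have hmul : ∀ Φ₁ Φ₂ : C(K, ℝ), Φ₁ ∈ S → Φ₂ ∈ S → Φ₁ * Φ₂ ∈ S := by
    rintro Φ₁ Φ₂ ⟨n₁, t₁, ht₁, φ₁, hφ₁c, ⟨C₁, hC₁⟩, hφ₁⟩
      ⟨n₂, t₂, ht₂, φ₂, hφ₂c, ⟨C₂, hC₂⟩, hφ₂⟩
    have htapp : ∀ i, Fin.append t₁ t₂ i ∈ I := by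
      intro i
      refine Fin.addCases (fun j => ?_) (fun j => ?_) i
      · rw [Fin.append_left]; exact ht₁ j
      · rw [Fin.append_right]; exact ht₂ j
    refine ⟨n₁ + n₂, Fin.append t₁ t₂, htapp,
      fun v => φ₁ (fun i => v (Fin.castAdd n₂ i)) * φ₂ (fun i => v (Fin.natAdd n₁ i)),
      ?_, ⟨C₁ * C₂, ?_⟩, ?_⟩
    · exact (hφ₁c.comp (continuous_pi fun i => continuous_apply _)).mul
        (hφ₂c.comp (continuous_pi fun i => continuous_apply _))
    · intro v
      rw [abs_mul]
      exact mul_le_mul (hC₁ (fun i => v (Fin.castAdd n₂ i)))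
        (hC₂ (fun i => v (Fin.natAdd n₁ i))) (abs_nonneg _)
        ((abs_nonneg _).trans (hC₁ (fun i => v (Fin.castAdd n₂ i))))
    · intro u
      have e₁ : (fun i => (u : C(I, M)) ⟨Fin.append t₁ t₂ (Fin.castAdd n₂ i), htapp (Fin.castAdd n₂ i)⟩)
          = fun i => (u : C(I, M)) ⟨t₁ i, ht₁ i⟩ := by
        funext i; exact congrArg _ (Subtype.ext (Fin.append_left t₁ t₂ i))
      have e₂ : (fun i => (u : C(I, M)) ⟨Fin.append t₁ t₂ (Fin.natAdd n₁ i), htapp (Fin.natAdd n₁ i)⟩)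
          = fun i => (u : C(I, M)) ⟨t₂ i, ht₂ i⟩ := by
        funext i; exact congrArg _ (Subtype.ext (Fin.append_right t₁ t₂ i))
      simp only [ContinuousMap.mul_apply, hφ₁ u, hφ₂ u, e₁, e₂]
  -- the subalgebra of cylindrical functions
  let A : Subalgebra ℝ C(K, ℝ) :=
  { carrier := S
    mul_mem' := fun h₁ h₂ => hmul _ _ h₁ h₂
    add_mem' := fun h₁ h₂ => hadd _ _ h₁ h₂
    one_mem' := by simpa using hconst 1
    zero_mem' := by simpa using hconst 0
    algebraMap_mem' := hconst }
  -- A separates points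
  have hsep : A.SeparatesPoints := by
    intro u v huv
    obtain ⟨t, htne⟩ : ∃ t : I, (u : C(I, M)) t ≠ (v : C(I, M)) t := by
      by_contra h
      push_neg at h
      exact huv (Subtype.ext (ContinuousMap.ext h))
    obtain ⟨g, hg0, hg1, hg01⟩ := exists_continuous_zero_one_of_isClosed
      (isClosed_singleton (x := (u : C(I, M)) t)) (isClosed_singleton (x := (v : C(I, M)) t))
      (Set.disjoint_singleton.mpr htne)
    let f : C(K, ℝ) := ⟨fun w => g ((w : C(I, M)) t),
      g.continuous.comp ((continuous_eval_const t).comp continuous_subtype_val)⟩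
    have hfS : f ∈ S := by
      refine ⟨1, fun _ => (t : ℝ), fun _ => t.2, fun v' => g (v' 0),
        g.continuous.comp (continuous_apply 0),
        ⟨1, fun v' => ?_⟩, fun w => rfl⟩
      have h01 := hg01 (v' 0)
      rw [abs_of_nonneg h01.1]
      exact h01.2
    refine ⟨f, ⟨f, hfS, rfl⟩, ?_⟩
    have h1 : f u = 0 := hg0 rfl
    have h2 : f v = 1 := hg1 rfl
    rw [h1, h2]
    exact zero_ne_one
  -- conclude by Stone–Weierstrass
  have hclosure := ContinuousMap.subalgebra_topologicalClosure_eq_top_of_separatesPoints A hsep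
  have hcl : closure (A : Set C(K, ℝ)) = Set.univ := by
    rw [← Subalgebra.topologicalClosure_coe, hclosure]
    rfl
  exact dense_iff_closure_eq.mpr hcl
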